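/- Let $(V_1, \dots, V_{n+1})$ be exchangeable real-valued random variables whose values are almost surely distinct, and let $t$ be a constant. Then $\mathbb{E}\left[\frac{\mathbf{1}\{V_{n+1} \ge t\}}{1 + \sum_{i=1}^n \mathbf{1}\{V_i \ge t\}}\right] = \frac{1}{n+1}\,\mathbb{P}\left(\exists\, i \in \{1,\dots,n+1\} : V_i \ge t\right) \le \frac{1}{n+1}. -/

import Mathlib

open MeasureTheory Finset

noncomputable def gfun (n : ℕ) (t : ℝ) (k : Fin (n + 1)) (v : Fin (n + 1) → ℝ) : ℝ :=
  (if t ≤ v k then (1 : ℝ) else 0) /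
    (1 + ∑ i ∈ univ.erase k, (if t ≤ v i then (1 : ℝ) else 0))

lemma gfun_meas (n : ℕ) (t : ℝ) (k : Fin (n + 1)) : Measurable (gfun n t k) := by
  apply Measurable.div
  · exact Measurable.ite (measurableSet_le measurable_const (measurable_pi_apply k))
      measurable_const measurable_const
  · apply Measurable.add measurable_const
    apply Finset.measurable_sum
    intro i _
    exact Measurable.ite (measurableSet_le measurable_const (measurable_pi_apply i))
      measurable_const measurable_const

lemma gfun_bound (n : ℕ) (t : ℝ) (k : Fin (n + 1)) (v : Fin (n + 1) → ℝ) :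
    ‖gfun n t k v‖ ≤ 1 := by
  unfold gfun
  have hden : (1 : ℝ) ≤ 1 + ∑ i ∈ univ.erase k, (if t ≤ v i then (1 : ℝ) else 0) := by
    have : (0:ℝ) ≤ ∑ i ∈ univ.erase k, (if t ≤ v i then (1 : ℝ) else 0) :=
      Finset.sum_nonneg fun i _ => by positivity
    linarith
  have hnum0 : (0:ℝ) ≤ (if t ≤ v k then (1 : ℝ) else 0) := by positivity
  have hnum1 : (if t ≤ v k then (1 : ℝ) else 0) ≤ 1 := by split <;> norm_num
  rw [Real.norm_eq_abs, abs_div, abs_of_nonneg hnum0, abs_of_nonneg (by linarith)]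
  rw [div_le_one (by linarith)]
  linarith

lemma gfun_nonneg (n : ℕ) (t : ℝ) (k : Fin (n + 1)) (v : Fin (n + 1) → ℝ) :
    0 ≤ gfun n t k v := by
  unfold gfun
  have : (0:ℝ) ≤ ∑ i ∈ univ.erase k, (if t ≤ v i then (1 : ℝ) else 0) :=
    Finset.sum_nonneg fun i _ => by positivity
  apply div_nonneg (by positivity) (by linarith)

lemma gfun_sum (n : ℕ) (t : ℝ) (v : Fin (n + 1) → ℝ) :
    ∑ k, gfun n t k v = if ∃ i, t ≤ v i then 1 else 0 := by
  classical
  set S := univ.filter (fun i : Fin (n+1) => t ≤ v i) with hS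
  have hsum : ∀ k : Fin (n+1), ∑ i ∈ univ.erase k, (if t ≤ v i then (1 : ℝ) else 0)
      = ((S.erase k).card : ℝ) := by
    intro k
    rw [Finset.sum_boole]
    congr 1
    rw [hS, Finset.filter_erase]
  have hg : ∀ k ∈ S, gfun n t k v = 1 / (S.card : ℝ) := by
    intro k hk
    have hkt : t ≤ v k := (Finset.mem_filter.mp hk).2
    have hcard : (S.erase k).card = S.card - 1 := Finset.card_erase_of_mem hk
    have hpos : 1 ≤ S.card := Finset.card_pos.mpr ⟨k, hk⟩
    unfold gfun
    rw [if_pos hkt, hsum k, hcard]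
    congr 1
    rw [Nat.cast_sub hpos]
    ring
  have hg0 : ∀ k ∉ S, gfun n t k v = 0 := by
    intro k hk
    have : ¬ t ≤ v k := by
      intro h; exact hk (Finset.mem_filter.mpr ⟨Finset.mem_univ k, h⟩)
    unfold gfun
    rw [if_neg this, zero_div]
  rw [← Finset.sum_subset (Finset.subset_univ S) (fun k _ hk => hg0 k hk)]
  rw [Finset.sum_congr rfl hg, Finset.sum_const, nsmul_eq_mul]
  by_cases h : ∃ i, t ≤ v i
  · obtain ⟨i, hi⟩ := h
    have hpos : 0 < S.card := Finset.card_pos.mpr ⟨i, Finset.mem_filter.mpr ⟨Finset.mem_univ i, hi⟩⟩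
    rw [if_pos ⟨i, hi⟩]
    field_simp
  · have hempty : S = ∅ := by
      rw [Finset.filter_eq_empty_iff]
      intro i _; exact fun hi => h ⟨i, hi⟩
    rw [if_neg h, hempty]
    simp

theorem stmt16 {Ω : Type*} [MeasurableSpace Ω] (μ : Measure Ω) [IsProbabilityMeasure μ]
    (n : ℕ) (V : Ω → Fin (n + 1) → ℝ) (hV : Measurable V)
    (hexch : ∀ π : Equiv.Perm (Fin (n + 1)),
      Measure.map (fun ω => V ω ∘ π) μ = Measure.map V μ)
    (hdist : ∀ᵐ ω ∂μ, Function.Injective (V ω))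
    (t : ℝ) :
    (∫ ω, (if t ≤ V ω (Fin.last n) then (1 : ℝ) else 0) /
        (1 + ∑ i : Fin n, (if t ≤ V ω i.castSucc then (1 : ℝ) else 0)) ∂μ
      = (1 / (n + 1 : ℝ)) * (μ {ω | ∃ i : Fin (n + 1), t ≤ V ω i}).toReal) ∧
    ∫ ω, (if t ≤ V ω (Fin.last n) then (1 : ℝ) else 0) /
        (1 + ∑ i : Fin n, (if t ≤ V ω i.castSucc then (1 : ℝ) else 0)) ∂μ
      ≤ 1 / (n + 1 : ℝ) := by
  classical
  -- rewrite the integrand as gfun at last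
  have himg : (univ.erase (Fin.last n)) = (univ : Finset (Fin n)).image Fin.castSucc := by
    ext i
    simp only [Finset.mem_erase, Finset.mem_univ, and_true, Finset.mem_image, true_and]
    constructor
    · intro hi
      exact ⟨i.castPred hi, by simp⟩
    · rintro ⟨j, _, rfl⟩
      exact (Fin.castSucc_lt_last j).ne
  have hrw : ∀ ω, (if t ≤ V ω (Fin.last n) then (1 : ℝ) else 0) /
        (1 + ∑ i : Fin n, (if t ≤ V ω i.castSucc then (1 : ℝ) else 0))
      = gfun n t (Fin.last n) (V ω) := by
    intro ω
    unfold gfun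
    congr 2
    rw [himg, Finset.sum_image (fun a _ b _ h => Fin.castSucc_injective n h)]
  -- integrability
  have hint : ∀ k : Fin (n+1), Integrable (fun ω => gfun n t k (V ω)) μ := by
    intro k
    apply (integrable_const (1:ℝ)).mono'
      (((gfun_meas n t k).comp hV).aestronglyMeasurable)
    exact Filter.Eventually.of_forall fun ω => gfun_bound n t k (V ω)
  -- all integrals equal
  have heq : ∀ k : Fin (n+1), ∫ ω, gfun n t k (V ω) ∂μ = ∫ ω, gfun n t (Fin.last n) (V ω) ∂μ := by
    intro k
    set π := Equiv.swap k (Fin.last n) with hπ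
    have hcomp : ∀ v : Fin (n+1) → ℝ, gfun n t k v = gfun n t (Fin.last n) (v ∘ π) := by
      intro v
      unfold gfun
      have h1 : (v ∘ π) (Fin.last n) = v k := by simp [hπ, Equiv.swap_apply_right]
      rw [h1]
      congr 2
      have h2 : (univ : Finset (Fin (n+1))).erase k
          = ((univ : Finset (Fin (n+1))).erase (Fin.last n)).image π := by
        rw [Finset.image_erase π.injective, Finset.image_univ_equiv]
        simp [hπ, Equiv.swap_apply_right]
      rw [h2, Finset.sum_image (fun a _ b _ h => π.injective h)]
      rfl
    have hmeasπ : Measurable (fun ω => V ω ∘ π) :=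
      measurable_pi_lambda _ fun i => (measurable_pi_apply (π i)).comp hV
    calc ∫ ω, gfun n t k (V ω) ∂μ
        = ∫ ω, gfun n t (Fin.last n) (V ω ∘ π) ∂μ := by simp_rw [hcomp]
      _ = ∫ v, gfun n t (Fin.last n) v ∂(Measure.map (fun ω => V ω ∘ π) μ) :=
          (integral_map hmeasπ.aemeasurable
            (gfun_meas n t (Fin.last n)).aestronglyMeasurable).symm
      _ = ∫ v, gfun n t (Fin.last n) v ∂(Measure.map V μ) := by rw [hexch π]
      _ = ∫ ω, gfun n t (Fin.last n) (V ω) ∂μ :=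
          integral_map hV.aemeasurable (gfun_meas n t (Fin.last n)).aestronglyMeasurable
  -- the key identity
  set s : Set Ω := {ω | ∃ i : Fin (n + 1), t ≤ V ω i} with hs
  have hsm : MeasurableSet s := by
    have : s = ⋃ i : Fin (n+1), {ω | t ≤ V ω i} := by
      ext ω; simp [hs]
    rw [this]
    exact MeasurableSet.iUnion fun i =>
      measurableSet_le measurable_const ((measurable_pi_apply i).comp hV)
  have hkey : (n + 1 : ℝ) * ∫ ω, gfun n t (Fin.last n) (V ω) ∂μ = (μ s).toReal := by
    have h1 : ∑ k : Fin (n+1), ∫ ω, gfun n t k (V ω) ∂μ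
        = ∫ ω, ∑ k : Fin (n+1), gfun n t k (V ω) ∂μ :=
      (integral_finset_sum univ fun k _ => hint k).symm
    have h2 : ∫ ω, ∑ k : Fin (n+1), gfun n t k (V ω) ∂μ
        = ∫ ω, s.indicator (fun _ => (1:ℝ)) ω ∂μ := by
      apply integral_congr_ae
      apply Filter.Eventually.of_forall
      intro ω
      simp only [Set.indicator_apply, hs, Set.mem_setOf_eq]
      exact gfun_sum n t (V ω)
    have h3 : ∫ ω, s.indicator (fun _ => (1:ℝ)) ω ∂μ = (μ s).toReal := by
      rw [integral_indicator_const (1:ℝ) hsm]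
      simp [smul_eq_mul]
      rfl
    calc (n + 1 : ℝ) * ∫ ω, gfun n t (Fin.last n) (V ω) ∂μ
        = ∑ k : Fin (n+1), ∫ ω, gfun n t k (V ω) ∂μ := by
          rw [Finset.sum_congr rfl fun k _ => heq k, Finset.sum_const, card_univ]
          simp [nsmul_eq_mul]
      _ = (μ s).toReal := by rw [h1, h2, h3]
  have hnpos : (0:ℝ) < n + 1 := by positivity
  have hmain : ∫ ω, (if t ≤ V ω (Fin.last n) then (1 : ℝ) else 0) /
        (1 + ∑ i : Fin n, (if t ≤ V ω i.castSucc then (1 : ℝ) else 0)) ∂μ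
      = (1 / (n + 1 : ℝ)) * (μ s).toReal := by
    simp_rw [hrw]
    field_simp
    linarith [hkey]
  refine ⟨hmain, ?_⟩
  rw [hmain]
  have hle : (μ s).toReal ≤ 1 := by
    have := ENNReal.toReal_mono ENNReal.one_ne_top (prob_le_one (μ := μ) (s := s))
    simpa using this
  calc (1 / (n + 1 : ℝ)) * (μ s).toReal ≤ (1 / (n + 1 : ℝ)) * 1 :=
        mul_le_mul_of_nonneg_left hle (by positivity)
    _ = 1 / (n + 1 : ℝ) := mul_one _
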